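/- For the action of τ on the affine root lattice V of type Ã_{n−1}: for every 1 ≤ i ≤ n−2, τ^i(s_{n−1}∘s_{n−2}∘⋯∘s_1(α_0)) = (i+1)δ + α_{n−i−1} + α_{n−i} + ⋯ + α_{n−1}. In particular each of these elements is a positive real affine root. -/

import Mathlib

/-! Statement 17: for the action of `τ` on the affine root lattice of type `Ã_{n-1}`:
for every `1 ≤ i ≤ n-2`,
`τ^i(s_{n-1}∘⋯∘s_1(α_0)) = (i+1)δ + α_{n-i-1} + α_{n-i} + ⋯ + α_{n-1}`;
in particular each of these elements is a positive real affine root. -/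

/-- The affine root lattice `V = ℤ × (Fin n → ℤ)` of type `Ã_{n-1}`; the first
coordinate records the coefficient of the basic imaginary root `δ`. -/
abbrev V (n : ℕ) : Type := ℤ × (Fin n → ℤ)

/-- The basic imaginary root `δ = (1, 0)`. -/
def deltaV (n : ℕ) : V n := (1, 0)

/-- The index preceding `i` cyclically (i.e. `i - 1 mod n`). -/
def prevIdx {n : ℕ} (i : Fin n) : Fin n := ⟨((i : ℕ) + (n - 1)) % n, Nat.mod_lt _ i.pos⟩

/-- The simple roots, indexed `0`-based by `Fin n`: writing `f_0, …, f_{n-1}` for the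
standard basis of `Fin n → ℤ` (so `e_k = f_{k-1}` in the paper's `1`-based notation),
`alphaV i = α_i = (0, e_i − e_{i+1}) = (0, f_{i-1} − f_i)` for `1 ≤ i ≤ n-1`, and
`alphaV 0 = α_0 = (1, e_n − e_1) = (1, f_{n-1} − f_0)`. -/
def alphaV {n : ℕ} (i : Fin n) : V n :=
  (if (i : ℕ) = 0 then 1 else 0, Pi.single (prevIdx i) 1 - Pi.single i 1)

/-- The pairing of `x ∈ V` with the coroot `α_i^∨`:
`⟨(r,v), α_i^∨⟩ = v_i − v_{i+1}` for `1 ≤ i ≤ n-1` and `⟨(r,v), α_0^∨⟩ = v_n − v_1`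
(in the paper's `1`-based notation). -/
def coroot {n : ℕ} (i : Fin n) (x : V n) : ℤ := x.2 (prevIdx i) - x.2 i

/-- The reflection `s_i : V → V`, `s_i(x) = x − ⟨x, α_i^∨⟩·α_i`. -/
def sV {n : ℕ} (i : Fin n) (x : V n) : V n := x - coroot i x • alphaV i

/-- `τ = s_{n-1}∘s_{n-2}∘⋯∘s_1∘s_0` acting on `V` (the `foldl` applies `s_0` first). -/
def tauV (n : ℕ) : V n → V n := fun x => (List.finRange n).foldl (fun y i => sV i y) x

/-- `κ = τ^{n-1}` acting on `V`. -/
def kappaV (n : ℕ) : V n → V n := (tauV n)^[n - 1]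

/-- Apply a sequence of reflections: `applySeq [i₁, …, i_k] x = s_{i_k}(⋯(s_{i₁} x))`,
i.e. the composite `s_{i_k} ∘ ⋯ ∘ s_{i₁}` applied to `x`. -/
def applySeq {n : ℕ} (l : List (Fin n)) (x : V n) : V n := l.foldl (fun y i => sV i y) x

/-- A positive real affine root: an element of `V` of the form `(r, e_i − e_j)` with
`i ≠ j` and `r > 0`, or `(0, e_i − e_j)` with `i < j`. -/
def IsPosRealRoot {n : ℕ} (x : V n) : Prop :=
  ∃ i j : Fin n, x.2 = Pi.single i 1 - Pi.single j 1 ∧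
    ((i ≠ j ∧ 0 < x.1) ∨ (i < j ∧ x.1 = 0))

namespace Stmt17Aux

lemma prevIdx_mk {n : ℕ} (j : ℕ) (h1 : 1 ≤ j) (h2 : j < n) :
    prevIdx (⟨j, h2⟩ : Fin n) = ⟨j - 1, by omega⟩ := by
  unfold prevIdx
  ext
  simp only
  have : j + (n - 1) = (j - 1) + n := by omega
  rw [this, Nat.add_mod_right, Nat.mod_eq_of_lt (by omega)]

lemma prevIdx_zero {n : ℕ} (h : 0 < n) :
    prevIdx (⟨0, h⟩ : Fin n) = ⟨n - 1, by omega⟩ := by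
  unfold prevIdx
  ext
  simp only [Nat.zero_add]
  exact Nat.mod_eq_of_lt (by omega)

lemma single_sub_apply {n : ℕ} (a b c : Fin n) :
    ((Pi.single a 1 - Pi.single b 1 : Fin n → ℤ)) c
      = (if c = a then 1 else 0) - (if c = b then 1 else 0) := by
  simp [Pi.single_apply]

lemma sV_neg_one {n : ℕ} (i a : Fin n) (r : ℤ) (ha1 : a ≠ prevIdx i) (ha2 : a ≠ i)
    (hpi : prevIdx i ≠ i) :
    sV i (r, Pi.single a 1 - Pi.single (prevIdx i) 1)
      = (r + (if (i:ℕ) = 0 then 1 else 0), Pi.single a 1 - Pi.single i 1) := by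
  have hc : coroot i ((r, Pi.single a 1 - Pi.single (prevIdx i) 1) : V n) = -1 := by
    unfold coroot
    simp only
    rw [single_sub_apply, single_sub_apply, if_neg (Ne.symm ha1), if_pos rfl,
      if_neg (Ne.symm ha2), if_neg hpi.symm]
    ring
  unfold sV
  rw [hc]
  unfold alphaV
  ext1
  · simp
  · simp only [Prod.snd_sub, Prod.smul_snd]
    rw [neg_smul, one_smul, sub_neg_eq_add]
    abel

lemma sV_neg_two {n : ℕ} (i : Fin n) (r : ℤ) (hpi : prevIdx i ≠ i) :
    sV i (r, Pi.single i 1 - Pi.single (prevIdx i) 1)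
      = (r + 2 * (if (i:ℕ) = 0 then 1 else 0), Pi.single (prevIdx i) 1 - Pi.single i 1) := by
  have hc : coroot i ((r, Pi.single i 1 - Pi.single (prevIdx i) 1) : V n) = -2 := by
    unfold coroot
    simp only
    rw [single_sub_apply, single_sub_apply]
    simp only [if_pos rfl, if_neg hpi, if_neg hpi.symm]
    norm_num
  unfold sV
  rw [hc]
  unfold alphaV
  ext1
  · simp only [Prod.fst_sub, Prod.smul_fst, smul_eq_mul]
    ring
  · simp only [Prod.snd_sub, Prod.smul_snd]
    rw [neg_smul, sub_neg_eq_add, two_smul]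
    abel

lemma applySeq_cons {n : ℕ} (h : Fin n) (t : List (Fin n)) (x : V n) :
    applySeq (h :: t) x = applySeq t (sV h x) := rfl

/-- The key chain computation: applying `s_j, s_{j+1}, …, s_{n-1}` in order to
`(r, f_a − f_{j-1})` (with `a ≠ j-1`, `1 ≤ j`) yields `(r, f_{a'} − f_{n-1})` where
`a' = a - 1` if `j ≤ a` and `a' = a` otherwise. -/
lemma chain {n : ℕ} (hn : 3 ≤ n) (k j : ℕ) (hjk : j + k = n) (hj : 1 ≤ j) (r : ℤ)
    (a : Fin n) (ha : (a : ℕ) ≠ j - 1) :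
      applySeq ((List.finRange n).drop j)
          (r, Pi.single a 1 - Pi.single (⟨j - 1, by omega⟩ : Fin n) 1)
        = (r, Pi.single (if h : j ≤ (a:ℕ) then (⟨(a:ℕ) - 1, by omega⟩ : Fin n) else a) 1
              - Pi.single (⟨n - 1, by omega⟩ : Fin n) 1) := by
  induction k generalizing j r a with
  | zero =>
    rw [List.drop_eq_nil_of_le (by simp; omega)]
    have hna : ¬ j ≤ (a:ℕ) := by omega
    rw [dif_neg hna]
    have : j - 1 = n - 1 := by omega
    simp only [this]
    rfl
  | succ k ih =>
    have hjn : j < n := by omega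
    rw [show (List.finRange n).drop j = ⟨j, hjn⟩ :: (List.finRange n).drop (j+1) by
      rw [List.drop_eq_getElem_cons (by simpa using hjn)]; simp]
    rw [applySeq_cons]
    have hprev : prevIdx (⟨j, hjn⟩ : Fin n) = ⟨j - 1, by omega⟩ := prevIdx_mk j hj hjn
    have hpi : prevIdx (⟨j, hjn⟩ : Fin n) ≠ ⟨j, hjn⟩ := by
      rw [hprev]; simp only [ne_eq, Fin.mk.injEq]; omega
    have hjne : ((⟨j, hjn⟩ : Fin n) : ℕ) ≠ 0 := by simpa using (by omega : j ≠ 0)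
    by_cases hcase : (a : ℕ) = j
    · have ha' : a = (⟨j, hjn⟩ : Fin n) := by ext; exact hcase
      subst ha'
      have hstep := sV_neg_two (⟨j, hjn⟩ : Fin n) r hpi
      rw [hprev, if_neg hjne, mul_zero, add_zero] at hstep
      rw [hstep]
      have key := ih (j+1) (by omega) (by omega) r (⟨j - 1, by omega⟩ : Fin n)
        (by simp only [ne_eq]; omega)
      simp only [Nat.add_sub_cancel] at key
      rw [key, dif_neg (show ¬ j + 1 ≤ ((⟨j - 1, by omega⟩ : Fin n) : ℕ) from by simp),
        dif_pos (show j ≤ ((⟨j, hjn⟩ : Fin n) : ℕ) from by simp)]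
    · have hstep := sV_neg_one (⟨j, hjn⟩ : Fin n) a r
        (by rw [hprev]; simp only [ne_eq, Fin.ext_iff]; exact ha)
        (by simp only [ne_eq, Fin.ext_iff]; exact hcase) hpi
      rw [hprev, if_neg hjne, add_zero] at hstep
      rw [hstep]
      have key := ih (j+1) (by omega) (by omega) r a (by simpa using hcase)
      simp only [Nat.add_sub_cancel] at key
      rw [key]
      split <;> split <;> first | rfl | (exfalso; omega)

lemma base {n : ℕ} (hn : 3 ≤ n) :
    applySeq ((List.finRange n).drop 1) (alphaV (⟨0, by omega⟩ : Fin n))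
      = (1, Pi.single (⟨n - 2, by omega⟩ : Fin n) 1 - Pi.single (⟨n - 1, by omega⟩ : Fin n) 1) := by
  have h0 : alphaV (⟨0, by omega⟩ : Fin n)
      = ((1 : ℤ), Pi.single (⟨n - 1, by omega⟩ : Fin n) 1
          - Pi.single (⟨1 - 1, by omega⟩ : Fin n) 1) := by
    unfold alphaV
    rw [prevIdx_zero (by omega)]
    norm_num
  rw [h0, chain hn (n - 1) 1 (by omega) le_rfl 1 (⟨n - 1, by omega⟩ : Fin n)
    (by simp; omega)]
  rw [dif_pos (show 1 ≤ ((⟨n - 1, by omega⟩ : Fin n) : ℕ) from by simp; omega)]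
  have : ((⟨n - 1, by omega⟩ : Fin n) : ℕ) - 1 = n - 2 := by simp; omega
  simp only [this]

lemma tau_step {n : ℕ} (hn : 3 ≤ n) (r : ℤ) (m : ℕ) (h1 : 1 ≤ m) (h2 : m ≤ n - 2) :
    tauV n (r, Pi.single (⟨m, by omega⟩ : Fin n) 1 - Pi.single (⟨n - 1, by omega⟩ : Fin n) 1)
      = (r + 1, Pi.single (⟨m - 1, by omega⟩ : Fin n) 1
          - Pi.single (⟨n - 1, by omega⟩ : Fin n) 1) := by
  show applySeq (List.finRange n) _ = _
  have h0n : 0 < n := by omega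
  rw [show List.finRange n = (⟨0, h0n⟩ : Fin n) :: (List.finRange n).drop 1 by
    conv_lhs => rw [← List.drop_zero (l := List.finRange n)]
    rw [List.drop_eq_getElem_cons (by simpa using h0n)]; simp]
  rw [applySeq_cons]
  have hprev : prevIdx (⟨0, h0n⟩ : Fin n) = ⟨n - 1, by omega⟩ := prevIdx_zero h0n
  have hstep := sV_neg_one (⟨0, h0n⟩ : Fin n) (⟨m, by omega⟩ : Fin n) r
    (by rw [hprev]; simp only [ne_eq, Fin.mk.injEq]; omega)
    (by simp only [ne_eq, Fin.mk.injEq]; omega)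
    (by rw [hprev]; simp only [ne_eq, Fin.mk.injEq]; omega)
  rw [hprev, if_pos rfl] at hstep
  rw [hstep, show (⟨0, h0n⟩ : Fin n) = ⟨1 - 1, by omega⟩ from rfl,
    chain hn (n - 1) 1 (by omega) le_rfl (r + 1) (⟨m, by omega⟩ : Fin n)
      (by simp; omega)]
  rw [dif_pos (show 1 ≤ ((⟨m, by omega⟩ : Fin n) : ℕ) from by simpa using h1)]

lemma iter_tau {n : ℕ} (hn : 3 ≤ n) :
    ∀ i, i ≤ n - 2 →
      (tauV n)^[i] (1, Pi.single (⟨n - 2, by omega⟩ : Fin n) 1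
          - Pi.single (⟨n - 1, by omega⟩ : Fin n) 1)
        = (((i : ℕ) : ℤ) + 1, Pi.single (⟨n - i - 2, by omega⟩ : Fin n) 1
            - Pi.single (⟨n - 1, by omega⟩ : Fin n) 1) := by
  intro i
  induction i with
  | zero =>
    intro _
    norm_num
  | succ i ih =>
    intro hi
    rw [Function.iterate_succ_apply', ih (by omega),
      tau_step hn _ (n - i - 2) (by omega) (by omega)]
    have h1 : n - i - 2 - 1 = n - (i + 1) - 2 := by omega
    have h2 : (((i + 1 : ℕ)) : ℤ) + 1 = ((i : ℕ) : ℤ) + 1 + 1 := by push_cast; ring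
    rw [h2]
    simp only [h1]

lemma alphaV_pos {n : ℕ} (j : ℕ) (h1 : 1 ≤ j) (h2 : j < n) :
    alphaV (⟨j, h2⟩ : Fin n)
      = ((0 : ℤ), Pi.single (⟨j - 1, by omega⟩ : Fin n) 1
          - Pi.single (⟨j, h2⟩ : Fin n) 1) := by
  unfold alphaV
  rw [prevIdx_mk j h1 h2]
  norm_num
  omega

lemma sum_alpha {n : ℕ} (hn : 3 ≤ n) :
    ∀ i, i ≤ n - 2 →
      (∑ k ∈ Finset.univ.filter (fun k : Fin n => n - i - 1 ≤ (k : ℕ)), alphaV k)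
        = ((0 : ℤ), Pi.single (⟨n - i - 2, by omega⟩ : Fin n) 1
            - Pi.single (⟨n - 1, by omega⟩ : Fin n) 1) := by
  intro i
  induction i with
  | zero =>
    intro _
    have hset : Finset.univ.filter (fun k : Fin n => n - 0 - 1 ≤ (k : ℕ))
        = {(⟨n - 1, by omega⟩ : Fin n)} := by
      ext k
      simp only [Finset.mem_filter, Finset.mem_univ, true_and, Finset.mem_singleton,
        Fin.ext_iff]
      have := k.isLt
      omega
    rw [hset, Finset.sum_singleton, alphaV_pos (n - 1) (by omega) (by omega)]
    have h1 : n - 1 - 1 = n - 0 - 2 := by omega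
    simp only [h1]
  | succ i ih =>
    intro hi
    have hset : Finset.univ.filter (fun k : Fin n => n - (i + 1) - 1 ≤ (k : ℕ))
        = insert (⟨n - i - 2, by omega⟩ : Fin n)
            (Finset.univ.filter (fun k : Fin n => n - i - 1 ≤ (k : ℕ))) := by
      ext k
      simp only [Finset.mem_filter, Finset.mem_univ, true_and, Finset.mem_insert,
        Fin.ext_iff]
      have := k.isLt
      omega
    have hnotmem : (⟨n - i - 2, by omega⟩ : Fin n)
        ∉ Finset.univ.filter (fun k : Fin n => n - i - 1 ≤ (k : ℕ)) := by
      simp only [Finset.mem_filter, Finset.mem_univ, true_and]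
      norm_num
      omega
    rw [hset, Finset.sum_insert hnotmem, ih (by omega),
      alphaV_pos (n - i - 2) (by omega) (by omega)]
    have h1 : n - i - 2 - 1 = n - (i + 1) - 2 := by omega
    simp only [h1]
    simp only [Prod.mk_add_mk, add_zero]
    rw [Prod.mk.injEq]
    refine ⟨rfl, ?_⟩
    abel

end Stmt17Aux

/-- For `1 ≤ i ≤ n-2`,
`τ^i(s_{n-1}∘⋯∘s_1(α_0)) = (i+1)δ + α_{n-i-1} + ⋯ + α_{n-1}`, a positive real affine
root.  (Here `(List.finRange n).drop 1 = [1, …, n-1]`, so `applySeq` applies `s_1`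
first and `s_{n-1}` last.) -/
theorem stmt17 {n : ℕ} (hn : 3 ≤ n) (i : ℕ) (hi1 : 1 ≤ i) (hi2 : i ≤ n - 2) :
    (tauV n)^[i] (applySeq ((List.finRange n).drop 1) (alphaV (⟨0, by omega⟩ : Fin n)))
        = ((i : ℤ) + 1) • deltaV n
          + ∑ k ∈ Finset.univ.filter (fun k : Fin n => n - i - 1 ≤ (k : ℕ)), alphaV k ∧
      IsPosRealRoot
        ((tauV n)^[i]
          (applySeq ((List.finRange n).drop 1) (alphaV (⟨0, by omega⟩ : Fin n)))) := by
  rw [Stmt17Aux.base hn, Stmt17Aux.iter_tau hn i hi2]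
  constructor
  · rw [Stmt17Aux.sum_alpha hn i hi2]
    show _ = ((i : ℤ) + 1) • ((1 : ℤ), (0 : Fin n → ℤ)) + _
    rw [Prod.smul_mk, Prod.mk_add_mk, smul_zero, zero_add, smul_eq_mul, mul_one, add_zero]
  · refine ⟨⟨n - i - 2, by omega⟩, ⟨n - 1, by omega⟩, rfl, Or.inl ⟨?_, ?_⟩⟩
    · simp only [ne_eq, Fin.mk.injEq]
      omega
    · show (0 : ℤ) < ((i : ℕ) : ℤ) + 1
      positivity
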